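/- Let n ≥ 1 and let α be a fixed-point-free involution of ZMod (2n) that is non-crossing. Then the permutation p of ZMod (2n) defined by p j = α (j + 1) has exactly n + 1 orbits. (Equivalently: a planar chord diagram on one circle with n chords has exactly n + 1 planar loops; this is the count of planar loops underlying the paper's notion of Hopf triples and Hopf divisors, where a diagram on l circles with δ chords has l + δ planar loops.) -/

import Mathlib

/-- `j` lies strictly between `a` and `b` in the positive cyclic order on `ZMod m`:
the open cyclic interval from `a` to `b` consists of the points met strictly between
`a` and `b` when traveling from `a` in the positive direction. -/
def CyclicBetween {m : ℕ} (a b j : ZMod m) : Prop :=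
  0 < (j - a).val ∧ (j - a).val < (b - a).val

/-- The chords `{i, α i}` and `{j, α j}` cross: exactly one of `j`, `α j` lies in the
open cyclic interval from `i` to `α i`. -/
def ChordsCross {m : ℕ} (α : Equiv.Perm (ZMod m)) (i j : ZMod m) : Prop :=
  Xor' (CyclicBetween i (α i) j) (CyclicBetween i (α i) (α j))

/-- The chord diagram encoded by the involution `α` is non-crossing (planar):
no two distinct chords cross. -/
def NonCrossing {m : ℕ} (α : Equiv.Perm (ZMod m)) : Prop :=
  ∀ i j : ZMod m, j ≠ i → j ≠ α i → ¬ ChordsCross α i j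

/-- The "planar loop" permutation `p j = α (j + 1)` on arc labels. -/
def loopPerm {m : ℕ} (α : Equiv.Perm (ZMod m)) : Equiv.Perm (ZMod m) :=
  (Equiv.addRight (1 : ZMod m)).trans α

/-- The setoid whose equivalence classes are the orbits of a permutation. -/
def orbitSetoid {β : Type*} (p : Equiv.Perm β) : Setoid β :=
  ⟨p.SameCycle,
    ⟨fun x => Equiv.Perm.SameCycle.refl p x, fun h => h.symm, fun h h' => h.trans h'⟩⟩

open Equiv Equiv.Perm

lemma step_const {β γ : Type*} (p : Perm β) (f : β → γ) (hf : ∀ x, f (p x) = f x) :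
    ∀ x y, p.SameCycle x y → f x = f y := by
  rintro x y ⟨k, rfl⟩
  induction k using Int.induction_on with
  | zero => simp
  | succ i ih =>
      have : (p ^ ((i : ℤ) + 1)) x = p ((p ^ (i : ℤ)) x) := by
        rw [add_comm, zpow_add, zpow_one]; rfl
      rw [this, hf]; exact ih
  | pred i ih =>
      have h1 : p ((p ^ (-(i : ℤ) - 1)) x) = (p ^ (-(i : ℤ))) x := by
        have : p ^ (-(i:ℤ)) = p ^ (1:ℤ) * p ^ (-(i:ℤ) - 1) := by
          rw [← zpow_add]; ring_nf
        rw [this]; simp [Equiv.Perm.mul_apply]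
      calc f x = f ((p ^ (-(i:ℤ))) x) := ih
    _ = f (p ((p ^ (-(i : ℤ) - 1)) x)) := by rw [h1]
    _ = f ((p ^ (-(i : ℤ) - 1)) x) := hf _

lemma card_orbit_conj {β γ : Type*} (p : Perm β) (q : Perm γ) (e : β ≃ γ)
    (h : ∀ x, e (p x) = q (e x)) :
    Nat.card (Quotient (orbitSetoid p)) = Nat.card (Quotient (orbitSetoid q)) := by
  have key : ∀ (k : ℤ) (x : β), e ((p ^ k) x) = (q ^ k) (e x) := by
    intro k
    induction k using Int.induction_on with
    | zero => simp
    | succ i ih =>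
        intro x
        have h1 : (p ^ ((i:ℤ)+1)) x = p ((p ^ (i:ℤ)) x) := by
          rw [add_comm, zpow_add, zpow_one]; rfl
        have h2 : (q ^ ((i:ℤ)+1)) (e x) = q ((q ^ (i:ℤ)) (e x)) := by
          rw [add_comm, zpow_add, zpow_one]; rfl
        rw [h1, h2, h, ih]
    | pred i ih =>
        intro x
        have h1 : (p ^ (-(i:ℤ)-1)) x = p⁻¹ ((p ^ (-(i:ℤ))) x) := by
          have : p ^ (-(i:ℤ)-1) = p⁻¹ * p ^ (-(i:ℤ)) := by
            rw [← zpow_neg_one, ← zpow_add]; ring_nf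
          rw [this]; simp [Perm.mul_apply]
        have h2 : (q ^ (-(i:ℤ)-1)) (e x) = q⁻¹ ((q ^ (-(i:ℤ))) (e x)) := by
          have : q ^ (-(i:ℤ)-1) = q⁻¹ * q ^ (-(i:ℤ)) := by
            rw [← zpow_neg_one, ← zpow_add]; ring_nf
          rw [this]; simp [Perm.mul_apply]
        have h3 : ∀ y, e (p⁻¹ y) = q⁻¹ (e y) := by
          intro y
          have := h (p⁻¹ y)
          rw [← Perm.mul_apply, mul_inv_cancel, Perm.one_apply] at this
          rw [this, ← Perm.mul_apply, inv_mul_cancel, Perm.one_apply]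
        rw [h1, h2, h3, ih]
  refine Nat.card_congr (Quotient.congr e ?_)
  intro a b
  constructor
  · rintro ⟨k, rfl⟩; exact ⟨k, (key k a).symm⟩
  · rintro ⟨k, hk⟩
    exact ⟨k, e.injective (by rw [key k a, hk])⟩

lemma zl_lift_val {M : ℕ} [NeZero M] (x : ZMod M) : ((x.val : ℕ) : ZMod M) = x :=
  ZMod.natCast_rightInverse x

lemma zl_sub_val {M : ℕ} [NeZero M] (x y : ZMod M) :
    (x - y).val = (x.val + (M - y.val)) % M := by
  have hy : y.val ≤ M := le_of_lt (ZMod.val_lt y)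
  have : x - y = ((x.val + (M - y.val) : ℕ) : ZMod M) := by
    push_cast [Nat.cast_sub hy]
    rw [zl_lift_val, zl_lift_val, ZMod.natCast_self]
    ring
  rw [this, ZMod.val_natCast]

lemma mod_helper (a j M : ℕ) (ha : a < M) (hj : j < M) :
    (j + (M - a)) % M = if a ≤ j then j - a else j + (M - a) := by
  split
  · next h =>
      have h2 : j + (M - a) = M + (j - a) := by omega
      rw [h2, Nat.add_mod_left, Nat.mod_eq_of_lt (by omega)]
  · next h => exact Nat.mod_eq_of_lt (by omega)

lemma cb_nat {M : ℕ} [NeZero M] (a b j : ℕ) (ha : a < M) (hb : b < M) (hj : j < M) :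
    CyclicBetween (a : ZMod M) (b : ZMod M) (j : ZMod M) ↔
      (0 < if a ≤ j then j - a else j + (M - a)) ∧
      ((if a ≤ j then j - a else j + (M - a)) < if a ≤ b then b - a else b + (M - a)) := by
  unfold CyclicBetween
  rw [zl_sub_val, zl_sub_val, ZMod.val_natCast, ZMod.val_natCast, ZMod.val_natCast,
    Nat.mod_eq_of_lt ha, Nat.mod_eq_of_lt hb, Nat.mod_eq_of_lt hj,
    mod_helper a j M ha hj, mod_helper a b M ha hb]

lemma cb_transfer {M1 M2 K : ℕ} [NeZero M1] [NeZero M2] (hK1 : K ≤ M1) (hK2 : K ≤ M2)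
    (a b j : ℕ) (ha : a < K) (hb : b < K) (hj : j < K) :
    CyclicBetween (a : ZMod M1) (b : ZMod M1) (j : ZMod M1) ↔
      CyclicBetween (a : ZMod M2) (b : ZMod M2) (j : ZMod M2) := by
  rw [cb_nat a b j (by omega) (by omega) (by omega),
      cb_nat a b j (by omega) (by omega) (by omega)]
  constructor <;> (rintro ⟨h1, h2⟩; constructor <;> [skip; skip]) <;>
    (revert h1 h2; split_ifs <;> omega)

lemma exists_short_chord {m : ℕ} (hm : 2 ≤ m) (α : Perm (ZMod m))
    (hfree : ∀ i, α i ≠ i) (hplanar : NonCrossing α) : ∃ i, α i = i + 1 := by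
  haveI : NeZero m := ⟨by omega⟩
  haveI : Fact (1 < m) := ⟨by omega⟩
  obtain ⟨i, -, hmin⟩ := Finset.exists_min_image Finset.univ
    (fun i : ZMod m => (α i - i).val) ⟨0, Finset.mem_univ 0⟩
  set k := (α i - i).val with hk
  have hk0 : k ≠ 0 := by
    intro h
    apply hfree i
    have : α i - i = 0 := by
      have := zl_lift_val (α i - i); rw [← hk, h] at this; simpa using this.symm
    linear_combination (norm := abel) this -- α i - i = 0 → α i = i
  by_cases hk1 : k = 1
  · refine ⟨i, ?_⟩
    have : α i - i = ((1:ℕ) : ZMod m) := by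
      rw [← hk1, hk, zl_lift_val]
    rw [Nat.cast_one] at this
    linear_combination (norm := abel) this
  · exfalso
    have hk2 : 2 ≤ k := by omega
    set j := i + 1 with hj
    have hval1 : (j - i).val = 1 := by
      simp [hj, ZMod.val_one]
    have hji : j ≠ i := by
      intro h; rw [h] at hval1; simp at hval1
    have hjα : j ≠ α i := by
      intro h; rw [← h] at hk; omega
    have hcb : CyclicBetween i (α i) j := by
      constructor
      · rw [hval1]; omega
      · rw [hval1, ← hk]; omega
    have hncross := hplanar i j hji hjα
    have hcb2 : CyclicBetween i (α i) (α j) := by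
      by_contra hne
      exact hncross (Or.inl ⟨hcb, hne⟩)
    obtain ⟨ht0, htk⟩ := hcb2
    set t := (α j - i).val with ht
    rw [← hk] at htk
    have hsub : α j - j = ((t - 1 : ℕ) : ZMod m) := by
      have h1 : α j - i = ((t : ℕ) : ZMod m) := by rw [ht, zl_lift_val]
      rw [Nat.cast_sub (by omega), ← h1, Nat.cast_one, hj]
      ring
    have hvt : (α j - j).val = t - 1 := by
      rw [hsub, ZMod.val_cast_of_lt (by have := ZMod.val_lt (α j - i); omega)]
    have := hmin j (Finset.mem_univ j)
    rw [hvt] at this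
    have hfj : (α j - j).val ≠ 0 := by
      intro h
      apply hfree j
      have h2 : α j - j = 0 := by
        have := zl_lift_val (α j - j); rw [h] at this; simpa using this.symm
      linear_combination (norm := abel) h2
    rw [hvt] at hfj
    omega

lemma loopPerm_apply {m : ℕ} (α : Equiv.Perm (ZMod m)) (j : ZMod m) :
    loopPerm α j = α (j + 1) := rfl

section Contract

variable {M : ℕ} (hM : 4 ≤ M)

lemma zl_val_add_one {M : ℕ} [NeZero M] (y : ZMod M) (h : y.val + 1 < M) :
    (y + 1).val = y.val + 1 := by
  have : y + 1 = ((y.val + 1 : ℕ) : ZMod M) := by push_cast [zl_lift_val]; ring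
  rw [this, ZMod.val_cast_of_lt h]

lemma contract {M : ℕ} (hM : 4 ≤ M) (α : Perm (ZMod M))
    (hinv : ∀ i, α (α i) = i) (hfree : ∀ i, α i ≠ i) (hplanar : NonCrossing α)
    (hA : α ((M - 2 : ℕ) : ZMod M) = ((M - 1 : ℕ) : ZMod M)) :
    ∃ β : Perm (ZMod (M - 2)), (∀ i, β (β i) = i) ∧ (∀ i, β i ≠ i) ∧ NonCrossing β ∧
      Nat.card (Quotient (orbitSetoid (loopPerm α))) =
        Nat.card (Quotient (orbitSetoid (loopPerm β))) + 1 := by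
  haveI : NeZero M := ⟨by omega⟩
  haveI : NeZero (M - 2) := ⟨by omega⟩
  set K := M - 2 with hK
  set A : ZMod M := ((M - 2 : ℕ) : ZMod M) with hAdef
  set B : ZMod M := ((M - 1 : ℕ) : ZMod M) with hBdef
  have hAval : A.val = M - 2 := ZMod.val_cast_of_lt (by omega)
  have hBval : B.val = M - 1 := ZMod.val_cast_of_lt (by omega)
  have hB : α B = A := by rw [← hA, hinv]
  have hAB : A + 1 = B := by
    rw [hAdef, hBdef, show M - 1 = (M - 2) + 1 by omega]; push_cast; ring
  have hB1 : B + 1 = 0 := by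
    rw [hBdef, show ((0 : ZMod M)) = ((M : ℕ) : ZMod M) by simp,
      show (M : ℕ) = (M - 1) + 1 by omega]; push_cast; ring
  -- values of lifted elements
  have small_stable : ∀ y : ZMod M, y.val < K → (α y).val < K := by
    intro y hy
    have h1 : (α y).val < M := ZMod.val_lt _
    have h2 : α y ≠ A := by
      intro h
      have : y = B := by rw [← hinv y, h, hA]
      rw [this, hBval] at hy; omega
    have h3 : α y ≠ B := by
      intro h
      have : y = A := by rw [← hinv y, h, hB]
      rw [this, hAval] at hy; omega
    have h2' : (α y).val ≠ M - 2 := by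
      intro h; exact h2 (by rw [hAdef, ← h, zl_lift_val])
    have h3' : (α y).val ≠ M - 1 := by
      intro h; exact h3 (by rw [hBdef, ← h, zl_lift_val])
    omega
  set lift : ZMod K → ZMod M := fun x => ((x.val : ℕ) : ZMod M) with hlift
  have lift_val : ∀ x : ZMod K, (lift x).val = x.val := by
    intro x; exact ZMod.val_cast_of_lt (lt_of_lt_of_le (ZMod.val_lt x) (by omega))
  set b : ZMod K → ZMod K := fun x => (((α (lift x)).val : ℕ) : ZMod K) with hb
  have bval : ∀ x : ZMod K, (b x).val = (α (lift x)).val := by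
    intro x
    exact ZMod.val_cast_of_lt (small_stable (lift x) (by rw [lift_val]; exact ZMod.val_lt x))
  have lift_b : ∀ x : ZMod K, lift (b x) = α (lift x) := by
    intro x; rw [hlift]; simp only []; rw [bval, zl_lift_val]
  have lift_inj : ∀ x y : ZMod K, lift x = lift y → x = y := by
    intro x y h
    have := congrArg ZMod.val h
    rw [lift_val, lift_val] at this
    exact ZMod.val_injective _ this
  have binv : Function.Involutive b := by
    intro x
    have : b (b x) = ((( α (lift (b x))).val : ℕ) : ZMod K) := rfl
    rw [this, lift_b, hinv, lift_val, zl_lift_val]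
  set β : Perm (ZMod K) := binv.toPerm with hβ
  have βapp : ∀ x, β x = b x := fun x => rfl
  have βinv : ∀ i, β (β i) = i := binv
  have βfree : ∀ i, β i ≠ i := by
    intro i h
    rw [βapp] at h
    apply hfree (lift i)
    rw [← lift_b, h]
  have βplanar : NonCrossing β := by
    intro i j hji hjβ
    have e1 : ∀ x : ZMod K, ((x.val : ℕ) : ZMod K) = x := fun x => zl_lift_val x
    have cbiff : ∀ u v w : ZMod K,
        CyclicBetween u v w ↔ CyclicBetween (lift u) (lift v) (lift w) := by
      intro u v w
      have h1 := cb_transfer (M1 := K) (M2 := M) (K := K) le_rfl (by omega)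
        u.val v.val w.val (ZMod.val_lt u) (ZMod.val_lt v) (ZMod.val_lt w)
      rw [e1, e1, e1] at h1
      exact h1
    intro hcross
    have hlji : lift j ≠ lift i := fun h => hji (lift_inj _ _ h)
    have hljα : lift j ≠ α (lift i) := by
      rw [← lift_b]
      intro h
      exact hjβ (lift_inj _ _ h)
    apply hplanar (lift i) (lift j) hlji hljα
    unfold ChordsCross at hcross ⊢
    rw [← lift_b, ← lift_b, ← cbiff, ← cbiff]
    exact hcross
  refine ⟨β, βinv, βfree, βplanar, ?_⟩
  set p : Perm (ZMod M) := loopPerm α with hp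
  set q : Perm (ZMod K) := loopPerm β with hq
  set s : Setoid (ZMod M) := orbitSetoid p with hs
  set t : Setoid (ZMod K) := orbitSetoid q with ht
  have papp : ∀ j, p j = α (j + 1) := fun j => rfl
  have qapp : ∀ x, q x = b (x + 1) := fun x => rfl
  -- q on small and top elements
  have qval : ∀ x : ZMod K, x.val + 1 < K →
      q x = (((α (((x.val + 1 : ℕ) : ZMod M))).val : ℕ) : ZMod K) := by
    intro x hx
    rw [qapp]
    have h1 : (x + 1).val = x.val + 1 := zl_val_add_one x hx
    have h2 : lift (x + 1) = ((x.val + 1 : ℕ) : ZMod M) := by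
      rw [hlift]; simp only []; rw [h1]
    show (((α (lift (x + 1))).val : ℕ) : ZMod K) = _
    rw [h2]
  have qtop : ∀ x : ZMod K, x.val = K - 1 →
      q x = (((α (0 : ZMod M)).val : ℕ) : ZMod K) := by
    intro x hx
    rw [qapp]
    have h1 : x + 1 = 0 := by
      have : x = ((K - 1 : ℕ) : ZMod K) := by rw [← hx, zl_lift_val]
      rw [this, show ((0 : ZMod K)) = ((K : ℕ) : ZMod K) by simp,
        show (K : ℕ) = (K - 1) + 1 by omega]
      push_cast; ring
    have h2 : lift (x + 1) = 0 := by
      rw [h1, hlift]; simp only [ZMod.val_zero, Nat.cast_zero]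
    show (((α (lift (x + 1))).val : ℕ) : ZMod K) = _
    rw [h2]
  -- classification of elements of ZMod M
  have classify : ∀ j : ZMod M, j.val < M - 2 ∨ j = A ∨ j = B := by
    intro j
    have := ZMod.val_lt j
    rcases lt_or_ge j.val (M - 2) with h | h
    · exact Or.inl h
    · rcases Nat.lt_or_ge j.val (M - 1) with h2 | h2
      · exact Or.inr (Or.inl (by rw [hAdef, show M - 2 = j.val by omega, zl_lift_val]))
      · exact Or.inr (Or.inr (by rw [hBdef, show M - 1 = j.val by omega, zl_lift_val]))
  -- the face-class map
  set f : ZMod M → (Quotient t) ⊕ PUnit.{1} := fun j =>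
    if j.val < M - 2 then Sum.inl (Quotient.mk t ((j.val : ℕ) : ZMod K))
    else if j.val = M - 2 then Sum.inr PUnit.unit
    else Sum.inl (Quotient.mk t ((M - 3 : ℕ) : ZMod K)) with hf
  have fsmall : ∀ j : ZMod M, j.val < M - 2 →
      f j = Sum.inl (Quotient.mk t ((j.val : ℕ) : ZMod K)) := by
    intro j h; rw [hf]; simp only [if_pos h]
  have fA : f A = Sum.inr PUnit.unit := by
    rw [hf]; simp only [hAval]; rw [if_neg (by omega)]; simp
  have fB : f B = Sum.inl (Quotient.mk t ((M - 3 : ℕ) : ZMod K)) := by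
    rw [hf]; simp only [hBval]; rw [if_neg (by omega), if_neg (by omega)]
  -- a step in q
  have qstep : ∀ x : ZMod K, Quotient.mk t (q x) = Quotient.mk t x :=
    fun x => Quotient.sound (Equiv.Perm.SameCycle.symm ⟨1, by simp⟩)
  have fp : ∀ j : ZMod M, f (p j) = f j := by
    intro j
    rcases classify j with hj | hj | hj
    · -- j.val < M - 2
      rcases Nat.lt_or_ge (j.val + 1) (M - 2) with hj1 | hj1
      · -- j.val + 1 < M - 2
        have hj1v : (j + 1).val = j.val + 1 := zl_val_add_one j (by omega)
        have hsm : (α (j + 1)).val < K := small_stable (j + 1) (by omega)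
        have hpj : p j = α (j + 1) := papp j
        rw [hpj, fsmall _ (by omega), fsmall _ hj]
        congr 1
        have hx : ((j.val : ℕ) : ZMod K).val = j.val := ZMod.val_cast_of_lt (by omega)
        have := qval ((j.val : ℕ) : ZMod K) (by rw [hx]; omega)
        rw [hx] at this
        have hlift2 : ((j.val + 1 : ℕ) : ZMod M) = j + 1 := by
          push_cast [zl_lift_val]; ring
        rw [hlift2] at this
        rw [← this, qstep]
      · -- j.val = M - 3
        have hj3 : j.val = M - 3 := by omega
        have hjA : j + 1 = A := by
          rw [show j = ((M - 3 : ℕ) : ZMod M) by rw [← hj3, zl_lift_val], hAdef,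
            show M - 2 = (M - 3) + 1 by omega]
          push_cast; ring
        have hpj : p j = B := by rw [papp, hjA, hA]
        rw [hpj, fB, fsmall _ hj, hj3]
    · -- j = A
      have hpj : p j = A := by rw [papp, hj, hAB, hB]
      rw [hpj, hj]
    · -- j = B
      have hpj : p j = α 0 := by rw [papp, hj, hB1]
      have h0 : (0 : ZMod M).val < K := by simp [ZMod.val_zero]; omega
      have hsm : (α 0).val < K := small_stable 0 h0
      rw [hpj, hj, fB, fsmall _ (by omega)]
      congr 1
      have hx : ((M - 3 : ℕ) : ZMod K).val = M - 3 := ZMod.val_cast_of_lt (by omega)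
      have := qtop ((M - 3 : ℕ) : ZMod K) (by rw [hx]; omega)
      rw [← this, qstep]
  have fconst : ∀ x y, @HasEquiv.Equiv _ (@instHasEquivOfSetoid _ s) x y → f x = f y :=
      step_const p f fp
  -- the reverse map
  set g0 : ZMod K → Quotient s := fun x => Quotient.mk s (lift x) with hg0
  have pstep : ∀ y : ZMod M, Quotient.mk s (p y) = Quotient.mk s y :=
    fun y => Quotient.sound (Equiv.Perm.SameCycle.symm ⟨1, by simp⟩)
  have claimC : ∀ x : ZMod K, g0 (q x) = g0 x := by
    intro x
    rcases Nat.lt_or_ge (x.val + 1) K with hx | hx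
    · have hq1 := qval x hx
      have hsm : (α ((x.val + 1 : ℕ) : ZMod M)).val < K :=
        small_stable _ (by rw [ZMod.val_cast_of_lt (by omega)]; omega)
      have hlq : lift (q x) = α ((x.val + 1 : ℕ) : ZMod M) := by
        rw [hq1, hlift]; simp only []
        rw [ZMod.val_cast_of_lt (by omega : (α ((x.val + 1 : ℕ) : ZMod M)).val < K), zl_lift_val]
      have hlx1 : lift x + 1 = ((x.val + 1 : ℕ) : ZMod M) := by
        rw [hlift]; push_cast; ring
      have hplx : p (lift x) = α ((x.val + 1 : ℕ) : ZMod M) := by rw [papp, hlx1]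
      rw [hg0]; simp only []
      rw [hlq, ← hplx, pstep]
    · have hx' : x.val = K - 1 := by have := ZMod.val_lt x; omega
      have hq1 := qtop x hx'
      have h0 : (0 : ZMod M).val < K := by simp [ZMod.val_zero]; omega
      have hsm : (α (0 : ZMod M)).val < K := small_stable 0 h0
      have hlq : lift (q x) = α 0 := by
        rw [hq1, hlift]; simp only []
        rw [ZMod.val_cast_of_lt (by omega : (α (0 : ZMod M)).val < K), zl_lift_val]
      have hlxA : lift x + 1 = A := by
        rw [hlift, hAdef]; simp only []
        rw [hx', show M - 2 = (K - 1) + 1 by omega]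
        push_cast; ring
      have hplx : p (lift x) = B := by rw [papp, hlxA, hA]
      have hplx2 : p (p (lift x)) = α 0 := by rw [hplx, papp, hB1]
      rw [hg0]; simp only []
      rw [hlq, ← hplx2, pstep, pstep]
  have gconst : ∀ x y, q.SameCycle x y → g0 x = g0 y := step_const q g0 claimC
  set F : Quotient s → (Quotient t) ⊕ PUnit.{1} := Quotient.lift f fconst with hF
  set G : (Quotient t) ⊕ PUnit.{1} → Quotient s :=
    Sum.elim (Quotient.lift g0 gconst) (fun _ => Quotient.mk s A) with hG
  have left : ∀ z : Quotient s, G (F z) = z := by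
    refine fun z => Quotient.inductionOn z ?_
    intro j
    rcases classify j with hj | hj | hj
    · rw [hF]; simp only [Quotient.lift_mk]
      rw [fsmall _ hj, hG]; simp only [Sum.elim_inl, Quotient.lift_mk, hg0]
      congr 1
      rw [hlift]; simp only []
      rw [ZMod.val_cast_of_lt (by omega : j.val < K), zl_lift_val]
    · rw [hF]; simp only [Quotient.lift_mk]
      rw [hj, fA, hG]; simp only [Sum.elim_inr]
    · rw [hF]; simp only [Quotient.lift_mk]
      rw [hj, fB, hG]; simp only [Sum.elim_inl, Quotient.lift_mk, hg0]
      have hl3 : lift ((M - 3 : ℕ) : ZMod K) = ((M - 3 : ℕ) : ZMod M) := by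
        rw [hlift]; simp only []
        rw [ZMod.val_cast_of_lt (by omega : M - 3 < K)]
      rw [hl3]
      apply Quotient.sound
      have hstep : p ((M - 3 : ℕ) : ZMod M) = B := by
        rw [papp, show ((M - 3 : ℕ) : ZMod M) + 1 = A by
          rw [hAdef, show M - 2 = (M - 3) + 1 by omega]; push_cast; ring, hA]
      exact ⟨1, by simpa using hstep⟩
  have right : ∀ z : (Quotient t) ⊕ PUnit.{1}, F (G z) = z := by
    rintro (c | u)
    · refine Quotient.inductionOn c ?_
      intro x
      rw [hG]; simp only [Sum.elim_inl, Quotient.lift_mk, hg0]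
      rw [hF]; simp only [Quotient.lift_mk]
      rw [fsmall _ (by rw [lift_val]; exact ZMod.val_lt x)]
      congr 1
      rw [lift_val, zl_lift_val]
    · rw [hG]; simp only [Sum.elim_inr]
      rw [hF]; simp only [Quotient.lift_mk]
      rw [fA]
  have e : Quotient s ≃ (Quotient t) ⊕ PUnit.{1} := ⟨F, G, left, right⟩
  rw [Nat.card_congr e, Nat.card_sum]
  simp

end Contract


/-- A planar chord diagram on one circle with `n ≥ 1` chords has exactly `n + 1`
planar loops: the permutation `p j = α (j + 1)` has exactly `n + 1` orbits. -/
lemma reduce {M : ℕ} (hM : 4 ≤ M) (α : Equiv.Perm (ZMod M))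
    (hinv : ∀ i, α (α i) = i) (hfree : ∀ i, α i ≠ i) (hplanar : NonCrossing α) :
    ∃ β : Equiv.Perm (ZMod (M - 2)), (∀ i, β (β i) = i) ∧ (∀ i, β i ≠ i) ∧ NonCrossing β ∧
      Nat.card (Quotient (orbitSetoid (loopPerm α))) =
        Nat.card (Quotient (orbitSetoid (loopPerm β))) + 1 := by
  haveI : NeZero M := ⟨by omega⟩
  obtain ⟨i, hi⟩ := exists_short_chord (by omega : 2 ≤ M) α hfree hplanar
  set A : ZMod M := ((M - 2 : ℕ) : ZMod M) with hAdef
  set B : ZMod M := ((M - 1 : ℕ) : ZMod M) with hBdef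
  have hAB : A + 1 = B := by
    rw [hAdef, hBdef, show M - 1 = (M - 2) + 1 by omega]; push_cast; ring
  set c : ZMod M := i - A with hc
  set b2 : ZMod M → ZMod M := fun x => α (x + c) - c with hb2
  have hinv₂' : Function.Involutive b2 := by
    intro x
    rw [hb2]; simp only []
    rw [show α (x + c) - c + c = α (x + c) by ring, hinv]
    ring
  set α₂ : Equiv.Perm (ZMod M) := hinv₂'.toPerm with hα₂
  have α₂app : ∀ x, α₂ x = α (x + c) - c := fun x => rfl
  have hinv₂ : ∀ x, α₂ (α₂ x) = x := hinv₂'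
  have hfree₂ : ∀ x, α₂ x ≠ x := by
    intro x h
    rw [α₂app, sub_eq_iff_eq_add] at h
    exact hfree (x + c) h
  have cb_shift : ∀ a bb j : ZMod M, CyclicBetween a bb j ↔
      CyclicBetween (a + c) (bb + c) (j + c) := by
    intro a bb j
    unfold CyclicBetween
    rw [show j + c - (a + c) = j - a by ring, show bb + c - (a + c) = bb - a by ring]
  have hplanar₂ : NonCrossing α₂ := by
    intro i' j' h1 h2 hcross
    apply hplanar (i' + c) (j' + c)
      (fun h => h1 (by have := add_right_cancel h; exact this))
      (fun h => h2 (by rw [α₂app, ← h]; ring))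
    unfold ChordsCross at hcross ⊢
    have e1 : α (i' + c) = α₂ i' + c := by rw [α₂app]; ring
    have e2 : α (j' + c) = α₂ j' + c := by rw [α₂app]; ring
    rw [e1, e2, ← cb_shift, ← cb_shift]
    exact hcross
  have hA₂ : α₂ A = B := by
    rw [α₂app, hc, show A + (i - A) = i by ring, hi, ← hAB]
    ring
  have hcount : Nat.card (Quotient (orbitSetoid (loopPerm α₂))) =
      Nat.card (Quotient (orbitSetoid (loopPerm α))) := by
    apply card_orbit_conj _ _ (Equiv.addRight c)
    intro x
    show loopPerm α₂ x + c = α (x + c + 1)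
    rw [loopPerm_apply, α₂app, show x + 1 + c = x + c + 1 by ring]
    ring
  obtain ⟨β, hβinv, hβfree, hβplanar, hβcount⟩ :=
    contract hM α₂ hinv₂ hfree₂ hplanar₂ hA₂
  exact ⟨β, hβinv, hβfree, hβplanar, by rw [← hcount, hβcount]⟩

/-- A planar chord diagram on one circle with `n ≥ 1` chords has exactly `n + 1`
planar loops: the permutation `p j = α (j + 1)` has exactly `n + 1` orbits. -/
theorem planar_chord_diagram_loop_count
    (n : ℕ) (hn : 1 ≤ n) (α : Equiv.Perm (ZMod (2 * n)))
    (hinv : ∀ i, α (α i) = i) (hfree : ∀ i, α i ≠ i)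
    (hplanar : NonCrossing α) :
    Nat.card (Quotient (orbitSetoid (loopPerm α))) = n + 1 := by
  induction n, hn using Nat.le_induction with
  | base =>
      have hp1 : loopPerm α = 1 := by
        apply Equiv.ext
        intro j
        have key : ∀ x y : ZMod (2 * 1), x ≠ y → x = y + 1 := by decide
        have h1 : α (j + 1) = (j + 1) + 1 := key _ _ (hfree (j + 1))
        have h2 : (j + 1) + 1 = j := by
          have : ∀ j : ZMod (2 * 1), (j + 1) + 1 = j := by decide
          exact this j
        simp only [Equiv.Perm.coe_one, id_eq]
        show α (j + 1) = j
        rw [h1, h2]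
      have hb : Function.Bijective (Quotient.mk (orbitSetoid (loopPerm α))) := by
        constructor
        · intro x y h
          have := Quotient.exact h
          rw [hp1] at this
          exact Equiv.Perm.sameCycle_one.mp this
        · exact Quotient.mk_surjective
      rw [← Nat.card_congr (Equiv.ofBijective _ hb), Nat.card_zmod]
  | succ n hn ih =>
      have hc := reduce (by omega : 4 ≤ 2 * (n + 1)) α hinv hfree hplanar
      rw [show 2 * (n + 1) - 2 = 2 * n by omega] at hc
      obtain ⟨β, hβinv, hβfree, hβplanar, hβcount⟩ := hc
      rw [hβcount, ih β hβinv hβfree hβplanar]
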